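/- Let hᵢ : Sⁿ⁻¹ → (0,∞) be continuous functions converging uniformly to h : Sⁿ⁻¹ → (0,∞). Then the Wulff shapes A[hᵢ] converge to A[h] in the Hausdorff metric. -/

import Mathlib

open Real Set Filter
open scoped RealInnerProductSpace

/-- The Wulff shape of a function `h` on the sphere. -/
def wulff {n : ℕ} (h : EuclideanSpace ℝ (Fin n) → ℝ) : Set (EuclideanSpace ℝ (Fin n)) :=
  ⋂ u ∈ Metric.sphere (0 : EuclideanSpace ℝ (Fin n)) 1, {x | ⟪x, u⟫ ≤ h u}

lemma mem_wulff' {n : ℕ} (h : EuclideanSpace ℝ (Fin n) → ℝ) (x : EuclideanSpace ℝ (Fin n)) :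
    x ∈ wulff h ↔ ∀ u ∈ Metric.sphere (0 : EuclideanSpace ℝ (Fin n)) 1, ⟪x, u⟫ ≤ h u := by
  simp [wulff]

/-- Wulff shapes of uniformly convergent positive continuous functions
converge in the Hausdorff metric. -/
theorem wulff_continuous {n : ℕ} (hn : 0 < n)
    (f : ℕ → EuclideanSpace ℝ (Fin n) → ℝ) (h : EuclideanSpace ℝ (Fin n) → ℝ)
    (hfc : ∀ i, ContinuousOn (f i) (Metric.sphere (0 : EuclideanSpace ℝ (Fin n)) 1))
    (hfpos : ∀ i, ∀ u ∈ Metric.sphere (0 : EuclideanSpace ℝ (Fin n)) 1, 0 < f i u)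
    (hc : ContinuousOn h (Metric.sphere (0 : EuclideanSpace ℝ (Fin n)) 1))
    (hpos : ∀ u ∈ Metric.sphere (0 : EuclideanSpace ℝ (Fin n)) 1, 0 < h u)
    (hunif : TendstoUniformlyOn f h atTop
      (Metric.sphere (0 : EuclideanSpace ℝ (Fin n)) 1)) :
    Tendsto (fun i => Metric.hausdorffDist (wulff (f i)) (wulff h)) atTop (nhds 0) := by
  set S := Metric.sphere (0 : EuclideanSpace ℝ (Fin n)) 1 with hSdef
  haveI : Nonempty (Fin n) := ⟨⟨0, hn⟩⟩
  have hS : S.Nonempty := NormedSpace.sphere_nonempty.mpr zero_le_one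
  have hSc : IsCompact S := isCompact_sphere _ _
  obtain ⟨u₀, hu₀, hmin⟩ := hSc.exists_isMinOn hS hc
  obtain ⟨u₁, hu₁, hmax⟩ := hSc.exists_isMaxOn hS hc
  set m := h u₀ with hmdef
  set R := h u₁ with hRdef
  have hm : 0 < m := hpos u₀ hu₀
  have hmR : m ≤ R := hmin hu₁
  have hR : 0 < R := lt_of_lt_of_le hm hmR
  -- 0 is in every Wulff shape of a positive function
  have hzero : ∀ g : EuclideanSpace ℝ (Fin n) → ℝ, (∀ u ∈ S, 0 < g u) → (0 : EuclideanSpace ℝ (Fin n)) ∈ wulff g := by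
    intro g hg
    rw [mem_wulff']
    intro u hu
    simpa using (hg u hu).le
  -- bound: every element of wulff h has norm ≤ R
  have hbound : ∀ x ∈ wulff h, ‖x‖ ≤ R := by
    intro x hx
    rcases eq_or_ne x 0 with rfl | hx0
    · simpa using hR.le
    · set u := ‖x‖⁻¹ • x with hudef
      have hxn : (0:ℝ) < ‖x‖ := norm_pos_iff.mpr hx0
      have hu : u ∈ S := by
        simp only [hSdef, Metric.mem_sphere, dist_zero_right, hudef, norm_smul,
          norm_inv, norm_norm]
        field_simp
      have h1 : ⟪x, u⟫ ≤ h u := (mem_wulff' h x).mp hx u hu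
      have h2 : ⟪x, u⟫ = ‖x‖ := by
        rw [hudef, real_inner_smul_right, real_inner_self_eq_norm_sq]
        field_simp
      calc ‖x‖ = ⟪x, u⟫ := h2.symm
        _ ≤ h u := h1
        _ ≤ R := hmax hu
  rw [Metric.tendsto_atTop]
  intro δ hδ
  set ε := min (m / 2) (δ * m / (2 * R)) with hεdef
  have hε : 0 < ε := lt_min (by positivity) (by positivity)
  have hεm : ε ≤ m / 2 := min_le_left _ _
  set t := ε / m with htdef
  have ht : 0 < t := by positivity
  have ht1 : t ≤ 1 / 2 := by
    rw [htdef, div_le_div_iff₀ hm (by norm_num)]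
    nlinarith
  have htR : t * R ≤ δ / 2 := by
    have h2 : ε ≤ δ * m / (2 * R) := min_le_right _ _
    rw [htdef, div_mul_eq_mul_div, div_le_div_iff₀ hm (by norm_num)]
    calc ε * R * 2 ≤ (δ * m / (2 * R)) * R * 2 := by nlinarith
      _ = δ * m := by field_simp
  have hev := (Metric.tendstoUniformlyOn_iff.mp hunif) ε hε
  rw [eventually_atTop] at hev
  obtain ⟨N, hN⟩ := hev
  refine ⟨N, fun i hi => ?_⟩
  have hclose : ∀ u ∈ S, dist (h u) (f i u) < ε := hN i hi
  -- direction 1: wulff h is close to wulff (f i)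
  have hdir1 : ∀ x ∈ wulff h, Metric.infDist x (wulff (f i)) ≤ t * R := by
    intro x hx
    have hmem : (1 - t) • x ∈ wulff (f i) := by
      rw [mem_wulff']
      intro u hu
      have h1 : ⟪x, u⟫ ≤ h u := (mem_wulff' h x).mp hx u hu
      have h2 : dist (h u) (f i u) < ε := hclose u hu
      have h3 : h u - ε < f i u := by
        rw [Real.dist_eq] at h2
        cases abs_lt.mp h2; linarith
      have h4 : m ≤ h u := hmin hu
      have h5 : ⟪(1 - t) • x, u⟫ = (1 - t) * ⟪x, u⟫ := real_inner_smul_left _ _ _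
      have h6 : (1 - t) * ⟪x, u⟫ ≤ (1 - t) * h u :=
        mul_le_mul_of_nonneg_left h1 (by linarith)
      have h7 : ε ≤ t * h u := by
        rw [htdef, div_mul_eq_mul_div, le_div_iff₀ hm]; nlinarith
      rw [h5]
      nlinarith
    calc Metric.infDist x (wulff (f i)) ≤ dist x ((1 - t) • x) :=
          Metric.infDist_le_dist_of_mem hmem
      _ = t * ‖x‖ := by
          rw [dist_eq_norm]
          have : x - (1 - t) • x = t • x := by
            rw [sub_smul, one_smul]; abel
          rw [this, norm_smul, Real.norm_eq_abs, abs_of_pos ht]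
      _ ≤ t * R := mul_le_mul_of_nonneg_left (hbound x hx) ht.le
  -- direction 2: wulff (f i) is close to wulff h
  have hdir2 : ∀ y ∈ wulff (f i), Metric.infDist y (wulff h) ≤ t * R := by
    intro y hy
    set y' := (1 + t)⁻¹ • y with hy'def
    have h1t : (0:ℝ) < 1 + t := by linarith
    have hmem : y' ∈ wulff h := by
      rw [mem_wulff']
      intro u hu
      have h1 : ⟪y, u⟫ ≤ f i u := (mem_wulff' (f i) y).mp hy u hu
      have h2 : dist (h u) (f i u) < ε := hclose u hu
      have h3 : f i u < h u + ε := by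
        rw [Real.dist_eq] at h2
        cases abs_lt.mp h2; linarith
      have h4 : m ≤ h u := hmin hu
      have h5 : ⟪y', u⟫ = (1 + t)⁻¹ * ⟪y, u⟫ := real_inner_smul_left _ _ _
      have h6 : ε ≤ t * h u := by
        rw [htdef]; rw [div_mul_eq_mul_div, le_div_iff₀ hm]; nlinarith
      rw [h5, inv_mul_le_iff₀ h1t]
      nlinarith
    have hyeq : y = (1 + t) • y' := by
      rw [hy'def, smul_smul, mul_inv_cancel₀ (ne_of_gt h1t), one_smul]
    calc Metric.infDist y (wulff h) ≤ dist y y' := Metric.infDist_le_dist_of_mem hmem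
      _ = t * ‖y'‖ := by
          rw [dist_eq_norm, hyeq]
          have : (1 + t) • y' - y' = t • y' := by
            rw [add_smul, one_smul]; abel
          rw [this, norm_smul, Real.norm_eq_abs, abs_of_pos ht]
      _ ≤ t * R := mul_le_mul_of_nonneg_left (hbound y' hmem) ht.le
  have hHle : Metric.hausdorffDist (wulff (f i)) (wulff h) ≤ t * R :=
    Metric.hausdorffDist_le_of_infDist (by positivity) hdir2 hdir1
  have hHnn : 0 ≤ Metric.hausdorffDist (wulff (f i)) (wulff h) :=
    Metric.hausdorffDist_nonneg
  rw [Real.dist_eq, abs_of_nonneg (by simpa using hHnn)]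
  simp only [sub_zero]
  linarith
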